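/- Let I be a closed unbounded set of ordinals with increasing enumeration ν ↦ κ_ν, and let B ⊆ I be limit suitable with min I ∈ B. Then: (1) for every tail traversal b of B, the subsequence of B determined by b (the union of the closed blocks of B below the members of b) is a suitable set; and (2) every suitable set B̂ ⊆ B is contained in the subsequence of B determined by some tail traversal of B. -/

import Mathlib

open Set

noncomputable section

/-- `l` is a limit point of the set `S` of ordinals: `l > 0` and `sup (S ∩ l) = l`. -/
def IsLimitPoint (S : Set Ordinal) (l : Ordinal) : Prop :=
  0 < l ∧ sSup (S ∩ Iio l) = l

/-- A set of ordinals is closed if it contains all of its limit points. -/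
def IsClosedSet (S : Set Ordinal) : Prop :=
  ∀ l, IsLimitPoint S l → l ∈ S

/-- A set of ordinals is unbounded (in the class of all ordinals). -/
def IsUnboundedSet (S : Set Ordinal) : Prop :=
  ∀ a, ∃ b ∈ S, a < b

/-- `B` is a suitable subset of `I`: it is a countable closed subset of `I`, every member of `B`
which is a limit point of `I` of countable cofinality is a limit point of `B`, and `B` is closed
under immediate predecessors in `I`. -/
def Suitable (I B : Set Ordinal) : Prop :=
  B ⊆ I ∧ B.Countable ∧ IsClosedSet B ∧
  (∀ β ∈ B, IsLimitPoint I β → β.cof ≤ Cardinal.aleph0 → IsLimitPoint B β) ∧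
  (∀ β ∈ B, ∀ m, IsGreatest (I ∩ Iio β) m → m ∈ B)

/-- `G` is a gap of `B` (relative to `I`): a maximal nonempty convex subset of `I \ B`. -/
def IsGap (I B G : Set Ordinal) : Prop :=
  G.Nonempty ∧ G ⊆ I \ B ∧
  (∀ x ∈ G, ∀ y ∈ G, ∀ z ∈ I \ B, x ≤ z → z ≤ y → z ∈ G) ∧
  ∀ G', G ⊆ G' → G' ⊆ I \ B →
    (∀ x ∈ G', ∀ y ∈ G', ∀ z ∈ I \ B, x ≤ z → z ≤ y → z ∈ G') → G' = G

/-- The foot `λ` of a gap `G` of `B`: `sup({0} ∪ {β ∈ B : β < inf G})`. -/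
def GapFoot (B G : Set Ordinal) : Ordinal :=
  sSup (insert 0 {β ∈ B | β < sInf G})

/-- `B` is a limit suitable subset of `I`. -/
def LimitSuitable (I B : Set Ordinal) : Prop :=
  Suitable I (B ∪ {l | IsLimitPoint B l}) ∧
  ∀ G, IsGap I B G →
    ((IsUnboundedSet G ∧ G = I ∩ Ici (GapFoot B G)) ∨
     (∃ δ, IsLeast {β ∈ B | ∀ g ∈ G, g < β} δ ∧
        IsLimitPoint I δ ∧ Cardinal.aleph0 < δ.cof ∧
        G = I ∩ Ico (GapFoot B G) δ)) ∧
    (GapFoot B G ≠ 0 →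
      ∃ ν : Ordinal, GapFoot B G = Ordinal.enumOrd I (ν + Ordinal.omega0))

/-- The tail of a gap `G` of `B`: `B ∩ (σ', λ)`, where `λ` is the foot of the gap and `σ'` is
the supremum of the members of `B` below the gap that are limit points of `I`. -/
def GapTail (I B G : Set Ordinal) : Set Ordinal :=
  B ∩ Ioo (sSup {β ∈ B | β < sInf G ∧ IsLimitPoint I β}) (GapFoot B G)

/-- `b` is a tail traversal of `B`: a subset of `B` containing exactly one element of the tail
of each gap of `B`, all of whose elements lie in such tails. -/
def TailTraversal (I B b : Set Ordinal) : Prop :=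
  b ⊆ B ∧ (∀ G, IsGap I B G → ∃! γ, γ ∈ b ∧ γ ∈ GapTail I B G) ∧
  ∀ γ ∈ b, ∃ G, IsGap I B G ∧ γ ∈ GapTail I B G

/-- The closed block of `B` below `γ`, for `γ` in the tail of the gap `G`:
`[δ', γ) ∩ B` where `δ' = sup((I \ B) ∩ λ)` and `λ` is the foot of `G`. -/
def ClosedBlock (I B G : Set Ordinal) (γ : Ordinal) : Set Ordinal :=
  Ico (sSup ((I \ B) ∩ Iio (GapFoot B G))) γ ∩ B

/-- The subsequence of `B` determined by a tail traversal `b`: the union of the closed blocks of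
`B` below the members of `b`. -/
def DeterminedSub (I B b : Set Ordinal) : Set Ordinal :=
  {x | ∃ γ ∈ b, ∃ G, IsGap I B G ∧ γ ∈ GapTail I B G ∧ x ∈ ClosedBlock I B G γ}


section Aux

lemma lp_nonempty {S : Set Ordinal} {l : Ordinal} (h : IsLimitPoint S l) :
    (S ∩ Iio l).Nonempty := by
  by_contra hne
  rw [not_nonempty_iff_eq_empty] at hne
  have h2 := h.2
  rw [hne, csSup_empty] at h2
  exact absurd h2.symm h.1.ne'

lemma lp_exists_between {S : Set Ordinal} {l : Ordinal} (h : IsLimitPoint S l) {c : Ordinal}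
    (hc : c < l) : ∃ x ∈ S, c < x ∧ x < l := by
  have hne : (S ∩ Iio l).Nonempty := lp_nonempty h
  obtain ⟨x, hx, hcx⟩ := exists_lt_of_lt_csSup hne (h.2.symm ▸ hc)
  exact ⟨x, hx.1, hcx, hx.2⟩

lemma lp_mono {A C : Set Ordinal} (h : A ⊆ C) {l} (hl : IsLimitPoint A l) :
    IsLimitPoint C l := by
  have h1 : sSup (C ∩ Iio l) ≤ l := csSup_le' (by rintro x ⟨-, hx⟩; exact le_of_lt hx)
  have hbdd : BddAbove (C ∩ Iio l) := ⟨l, fun x hx => le_of_lt hx.2⟩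
  have h2 : l ≤ sSup (C ∩ Iio l) := by
    calc l = sSup (A ∩ Iio l) := hl.2.symm
    _ ≤ sSup (C ∩ Iio l) := csSup_le_csSup hbdd (lp_nonempty hl) (inter_subset_inter_left _ h)
  exact ⟨hl.1, le_antisymm h1 h2⟩

lemma bddAbove_of_countable {B : Set Ordinal} (h : B.Countable) : BddAbove B := by
  have := h.to_subtype
  have := Countable.toSmall (B : Set Ordinal)
  exact Ordinal.bddAbove_of_small

lemma lp_not_of_greatest {S : Set Ordinal} {b m : Ordinal} (h : IsGreatest (S ∩ Iio b) m) :
    ¬ IsLimitPoint S b := by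
  intro hl
  have := h.csSup_eq
  rw [hl.2] at this
  exact absurd (this ▸ h.1.2) (lt_irrefl b)

variable {I B : Set Ordinal}

/-- Two gaps sharing a point are equal. -/
lemma gap_unique {G G' : Set Ordinal} (hG : IsGap I B G) (hG' : IsGap I B G')
    {p : Ordinal} (hpG : p ∈ G) (hpG' : p ∈ G') : G = G' := by
  have hconv : ∀ x ∈ G ∪ G', ∀ y ∈ G ∪ G', ∀ z ∈ I \ B, x ≤ z → z ≤ y → z ∈ G ∪ G' := by
    intro x hx y hy z hz hxz hzy
    rcases le_or_gt z p with hzp | hpz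
    · rcases hx with hx | hx
      · exact Or.inl (hG.2.2.1 x hx p hpG z hz hxz hzp)
      · exact Or.inr (hG'.2.2.1 x hx p hpG' z hz hxz hzp)
    · rcases hy with hy | hy
      · exact Or.inl (hG.2.2.1 p hpG y hy z hz hpz.le hzy)
      · exact Or.inr (hG'.2.2.1 p hpG' y hy z hz hpz.le hzy)
  have hsub : G ∪ G' ⊆ I \ B := union_subset hG.2.1 hG'.2.1
  have h1 : G ∪ G' = G := hG.2.2.2 _ subset_union_left hsub hconv
  have h2 : G ∪ G' = G' := hG'.2.2.2 _ subset_union_right hsub hconv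
  rw [← h1, h2]

/-- Every point of `I \ B` lies in a gap. -/
lemma exists_gap {x : Ordinal} (hx : x ∈ I \ B) : ∃ G, IsGap I B G ∧ x ∈ G := by
  set U : Set Ordinal :=
    {y | ∃ C : Set Ordinal, x ∈ C ∧ C ⊆ I \ B ∧
      (∀ a ∈ C, ∀ b ∈ C, ∀ z ∈ I \ B, a ≤ z → z ≤ b → z ∈ C) ∧ y ∈ C} with hU
  have hxU : x ∈ U := by
    refine ⟨{x}, rfl, by simpa using hx, ?_, rfl⟩
    rintro a rfl b rfl z hz h1 h2
    exact le_antisymm h2 h1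
  have hUsub : U ⊆ I \ B := by rintro y ⟨C, -, hC, -, hy⟩; exact hC hy
  have hUconv : ∀ a ∈ U, ∀ b ∈ U, ∀ z ∈ I \ B, a ≤ z → z ≤ b → z ∈ U := by
    rintro a ⟨Ca, hxa, hCa, hconva, ha⟩ b ⟨Cb, hxb, hCb, hconvb, hb⟩ z hz haz hzb
    rcases le_or_gt z x with hzx | hxz
    · exact ⟨Ca, hxa, hCa, hconva, hconva a ha x hxa z hz haz hzx⟩
    · exact ⟨Cb, hxb, hCb, hconvb, hconvb x hxb b hb z hz hxz.le hzb⟩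
  refine ⟨U, ⟨⟨x, hxU⟩, hUsub, hUconv, ?_⟩, hxU⟩
  intro G' hsub hG'sub hG'conv
  apply Subset.antisymm _ hsub
  intro y hy
  exact ⟨G', hsub hxU, hG'sub, hG'conv, hy⟩

lemma unb_not_bddAbove {S : Set Ordinal} (h : IsUnboundedSet S) : ¬ BddAbove S := by
  rintro ⟨u, hu⟩
  obtain ⟨b, hb, hub⟩ := h u
  exact absurd (hu hb) (not_le.2 hub)

lemma B_sub_I (hB : LimitSuitable I B) : B ⊆ I := fun x hx => hB.1.1 (Or.inl hx)

lemma gap_basic (hIunb : IsUnboundedSet I) (hB : LimitSuitable I B) (hmin : sInf I ∈ B)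
    {G : Set Ordinal} (hG : IsGap I B G) :
    GapFoot B G ∈ G ∧ GapFoot B G ∉ B ∧ sInf G = GapFoot B G ∧
      IsLimitPoint B (GapFoot B G) ∧ ∃ ν, GapFoot B G = Ordinal.enumOrd I (ν + Ordinal.omega0) := by
  set lam := GapFoot B G with hlamdef
  have hlam_le : lam ≤ sInf G := by
    apply csSup_le'
    rintro x (rfl | ⟨-, hx⟩)
    · exact zero_le
    · exact le_of_lt hx
  have hInon : I.Nonempty := ⟨(hIunb 0).choose, (hIunb 0).choose_spec.1⟩
  have hInfI : sInf I ∈ I := csInf_mem hInon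
  have hlam_ne : lam ≠ 0 := by
    intro h0
    rcases (hB.2 G hG).1 with ⟨-, hGeq⟩ | ⟨δ, hδleast, -, -, hGeq⟩
    · have : sInf I ∈ G := by
        rw [hGeq, ← hlamdef, h0]
        exact ⟨hInfI, mem_Ici.2 zero_le⟩
      exact (hG.2.1 this).2 hmin
    · have h1 : ¬ (sInf I < δ) := by
        intro hlt
        have : sInf I ∈ G := by
          rw [hGeq, ← hlamdef, h0]
          exact ⟨hInfI, zero_le, hlt⟩
        exact (hG.2.1 this).2 hmin
      obtain ⟨g, hg⟩ := hG.1
      have hgI : g ∈ I := (hG.2.1 hg).1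
      have hgδ : g < δ := hδleast.1.2 g hg
      exact absurd ((csInf_le' hgI).trans_lt hgδ) h1
  obtain ⟨ν, hν⟩ := (hB.2 G hG).2 hlam_ne
  have hlamI : lam ∈ I := by
    rw [hlamdef, hν]; exact Ordinal.enumOrd_mem (unb_not_bddAbove hIunb) _
  have hlamG : lam ∈ G := by
    rcases (hB.2 G hG).1 with ⟨-, hGeq⟩ | ⟨δ, -, -, -, hGeq⟩
    · rw [hGeq, ← hlamdef]; exact ⟨hlamI, mem_Ici.2 le_rfl⟩
    · obtain ⟨g, hg⟩ := hG.1
      rw [hGeq, ← hlamdef] at hg ⊢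
      exact ⟨hlamI, mem_Ico.2 ⟨le_rfl, lt_of_le_of_lt hg.2.1 hg.2.2⟩⟩
  have hlamnB : lam ∉ B := (hG.2.1 hlamG).2
  have hglb : ∀ g ∈ G, lam ≤ g := by
    intro g hg
    rcases (hB.2 G hG).1 with ⟨-, hGeq⟩ | ⟨δ, -, -, -, hGeq⟩
    · rw [hGeq, ← hlamdef] at hg; exact hg.2
    · rw [hGeq, ← hlamdef] at hg; exact hg.2.1
  have hsInf : sInf G = lam := le_antisymm (csInf_le' hlamG) (le_csInf hG.1 hglb)
  have hTeq : {β ∈ B | β < sInf G} = B ∩ Iio lam := by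
    ext x; rw [hsInf]; rfl
  have hTne : (B ∩ Iio lam).Nonempty := by
    refine ⟨sInf I, hmin, ?_⟩
    have h1 : sInf I ≤ lam := csInf_le' hlamI
    rcases h1.lt_or_eq with h | h
    · exact h
    · exact absurd (h ▸ hmin) hlamnB
  have hTbdd : BddAbove (B ∩ Iio lam) := ⟨lam, fun x hx => le_of_lt hx.2⟩
  have hsup : lam = sSup (B ∩ Iio lam) := by
    conv_lhs => rw [hlamdef, GapFoot, hTeq, csSup_insert hTbdd hTne,
      sup_eq_right.2 (zero_le)]
  exact ⟨hlamG, hlamnB, hsInf, ⟨pos_iff_ne_zero.2 hlam_ne, hsup.symm⟩, ν, hν⟩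

lemma gap_aux (hIunb : IsUnboundedSet I) (hB : LimitSuitable I B) (hmin : sInf I ∈ B)
    {G : Set Ordinal} (hG : IsGap I B G) {x : Ordinal}
    (hx : x ∈ I \ B) (hxlam : x < GapFoot B G) :
    ∃ d ∈ B, x < d ∧ d < GapFoot B G ∧ IsLimitPoint I d ∧ Cardinal.aleph0 < d.cof ∧
      ∀ y ∈ B, x < y → d ≤ y := by
  obtain ⟨H, hH, hxH⟩ := exists_gap hx
  obtain ⟨hlamG_mem, hlamG_nB, hsInfG, -, -⟩ := gap_basic hIunb hB hmin hG
  obtain ⟨-, -, hsInfH, -, -⟩ := gap_basic hIunb hB hmin hH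
  have hlamG_IB : GapFoot B G ∈ I \ B := hG.2.1 hlamG_mem
  have hfootH_x : GapFoot B H ≤ x := hsInfH ▸ csInf_le' hxH
  have hxne : x ∉ G := fun hxG => absurd (hsInfG ▸ csInf_le' hxG) (not_le.2 hxlam)
  rcases (hB.2 H hH).1 with ⟨-, hHeq⟩ | ⟨δ, hδleast, hδlim, hδcof, hHeq⟩
  · exfalso
    have hlamGH : GapFoot B G ∈ H := by
      rw [hHeq]
      exact ⟨hlamG_IB.1, mem_Ici.2 (hfootH_x.trans hxlam.le)⟩
    exact hxne ((gap_unique hH hG hlamGH hlamG_mem) ▸ hxH)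
  · have hδB : δ ∈ B := hδleast.1.1
    have hxδ : x < δ := hδleast.1.2 x hxH
    have hδle : δ ≤ GapFoot B G := by
      by_contra hlt
      push_neg at hlt
      have hlamGH : GapFoot B G ∈ H := by
        rw [hHeq]
        exact ⟨hlamG_IB.1, mem_Ico.2 ⟨hfootH_x.trans hxlam.le, hlt⟩⟩
      exact hxne ((gap_unique hH hG hlamGH hlamG_mem) ▸ hxH)
    have hδlam : δ < GapFoot B G := by
      rcases hδle.lt_or_eq with h | h
      · exact h
      · exact absurd (h ▸ hδB) hlamG_IB.2
    refine ⟨δ, hδB, hxδ, hδlam, hδlim, hδcof, ?_⟩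
    intro y hy hxy
    apply hδleast.2
    refine ⟨hy, ?_⟩
    intro g hg
    by_contra hyg
    push_neg at hyg
    have hgδ : g < δ := by
      rw [hHeq] at hg; exact hg.2.2
    have : y ∈ H := by
      rw [hHeq]
      exact ⟨B_sub_I hB hy, mem_Ico.2 ⟨hfootH_x.trans hxy.le, lt_of_le_of_lt hyg hgδ⟩⟩
    exact (hH.2.1 this).2 hy

def GapSigma (I B G : Set Ordinal) : Ordinal :=
  sSup {β ∈ B | β < sInf G ∧ IsLimitPoint I β}

def GapDelta' (I B G : Set Ordinal) : Ordinal :=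
  sSup ((I \ B) ∩ Iio (GapFoot B G))

lemma gapTail_eq (I B G : Set Ordinal) :
    GapTail I B G = B ∩ Ioo (GapSigma I B G) (GapFoot B G) := rfl

lemma closedBlock_eq (I B G : Set Ordinal) (γ : Ordinal) :
    ClosedBlock I B G γ = Ico (GapDelta' I B G) γ ∩ B := rfl

lemma descend {P : ℕ → Prop} (h : ∀ k, P (k + 1) → P k) :
    ∀ m, P m → ∀ j ≤ m, P j := by
  intro m
  induction m with
  | zero =>
    intro hP j hj
    rw [Nat.le_zero.1 hj]; exact hP
  | succ m ih =>
    intro hP j hj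
    rcases eq_or_lt_of_le hj with rfl | hj
    · exact hP
    · exact ih (h m hP) j (Nat.lt_succ_iff.1 hj)

lemma tail_cofinal (hIcl : IsClosedSet I) (hIunb : IsUnboundedSet I) (hB : LimitSuitable I B)
    (hmin : sInf I ∈ B) {G : Set Ordinal} (hG : IsGap I B G) {s : Ordinal}
    (hs : s < GapFoot B G) :
    ∃ γ ∈ GapTail I B G, s < γ := by
  obtain ⟨hlamG, hlamnB, hsInf, hlamlp, ν, hν⟩ := gap_basic hIunb hB hmin hG
  have hnb : ¬ BddAbove I := unb_not_bddAbove hIunb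
  have hsm := Ordinal.enumOrd_strictMono hnb
  set lam := GapFoot B G with hlamdef
  set e : ℕ → Ordinal := fun n => Ordinal.enumOrd I (ν + n) with he
  have hmono : ∀ {n m : ℕ}, n < m → e n < e m := fun h =>
    hsm ((add_lt_add_iff_left ν).2 (Nat.cast_lt.2 h))
  have hν' : GapFoot B G = Ordinal.enumOrd I (ν + Ordinal.omega0) := hν
  have he_lt : ∀ n : ℕ, e n < lam := by
    intro n
    show e n < GapFoot B G
    rw [hν']
    exact hsm ((add_lt_add_iff_left ν).2 (Ordinal.nat_lt_omega0 n))
  have he_mem : ∀ n : ℕ, e n ∈ I := fun n => Ordinal.enumOrd_mem hnb _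
  have hrange : ∀ x ∈ I, ∃ μ, Ordinal.enumOrd I μ = x := by
    intro x hxI
    have := Ordinal.range_enumOrd hnb
    rw [← this] at hxI
    exact hxI
  have hbetween : ∀ x ∈ I, e 0 < x → x < lam → ∃ n : ℕ, x = e (n + 1) := by
    intro x hxI hx0 hxlam
    obtain ⟨μ, hμ⟩ := hrange x hxI
    have hνμ : ν + ((0 : ℕ) : Ordinal) < μ := hsm.lt_iff_lt.1 (by rw [hμ]; exact hx0)
    have hν0 : ν < μ := by simpa using hνμ
    have hμlt : μ < ν + Ordinal.omega0 := by
      apply hsm.lt_iff_lt.1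
      rw [hμ, ← hν]
      exact hxlam
    have hμeq : ν + (μ - ν) = μ := Ordinal.add_sub_cancel_of_le hν0.le
    have hkω : μ - ν < Ordinal.omega0 := by
      rw [← add_lt_add_iff_left ν, hμeq]; exact hμlt
    obtain ⟨n, hn⟩ := Ordinal.lt_omega0.1 hkω
    have hnne : n ≠ 0 := by
      rintro rfl
      rw [Nat.cast_zero] at hn
      rw [hn, add_zero] at hμeq
      exact absurd hμeq (ne_of_lt hν0)
    obtain ⟨m, rfl⟩ := Nat.exists_eq_succ_of_ne_zero hnne
    refine ⟨m, ?_⟩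
    rw [← hμ, he]
    congr 1
    rw [← hμeq, hn]
  have hgreat : ∀ n : ℕ, IsGreatest (I ∩ Iio (e (n + 1))) (e n) := by
    intro n
    constructor
    · exact ⟨he_mem n, hmono (Nat.lt_succ_self n)⟩
    · intro x hx
      obtain ⟨μ, hμ⟩ := hrange x hx.1
      have hμlt : μ < ν + ((n : Ordinal) + 1) := by
        have := hsm.lt_iff_lt.1 (show Ordinal.enumOrd I μ < e (n+1) by rw [hμ]; exact hx.2)
        simpa [Nat.cast_succ] using this
      have hμle : μ ≤ ν + n := by
        rw [← add_assoc, Ordinal.add_one_eq_succ, Order.lt_succ_iff] at hμlt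
        exact hμlt
      rw [← hμ]
      exact hsm.monotone hμle
  have hsupe : ∀ s' < lam, ∃ n : ℕ, s' < e n := by
    intro s' hs'
    by_contra hcon
    push_neg at hcon
    have hbdd : BddAbove (range e) := ⟨s', by rintro x ⟨n, rfl⟩; exact hcon n⟩
    set t := sSup (range e) with ht
    have het : ∀ n : ℕ, e n < t :=
      fun n => lt_of_lt_of_le (hmono (Nat.lt_succ_self n)) (le_csSup hbdd (mem_range_self _))
    have ht_le : t ≤ s' := csSup_le' (by rintro x ⟨n, rfl⟩; exact hcon n)
    have htlp : IsLimitPoint I t := by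
      constructor
      · exact lt_of_le_of_lt ((zero_le (a := e 0))) (het 0)
      · apply le_antisymm (csSup_le' (by rintro x ⟨-, hx⟩; exact le_of_lt hx))
        have hbdd2 : BddAbove (I ∩ Iio t) := ⟨t, fun y hy => le_of_lt hy.2⟩
        have h1 : ∀ n : ℕ, e n ≤ sSup (I ∩ Iio t) :=
          fun n => le_csSup hbdd2 ⟨he_mem n, het n⟩
        have h2 : sSup (range e) ≤ sSup (I ∩ Iio t) := csSup_le' (by rintro x ⟨n, rfl⟩; exact h1 n)
        exact h2
    have htI : t ∈ I := hIcl t htlp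
    obtain ⟨μ, hμ⟩ := hrange t htI
    have hall : ∀ n : ℕ, ν + (n : Ordinal) < μ :=
      fun n => hsm.lt_iff_lt.1 (by rw [hμ]; exact het n)
    have hνω : ν + Ordinal.omega0 ≤ μ := by
      by_contra hlt
      push_neg at hlt
      have hν0 : ν < μ := by simpa using hall 0
      have hμeq : ν + (μ - ν) = μ := Ordinal.add_sub_cancel_of_le hν0.le
      have hkω : μ - ν < Ordinal.omega0 := by
        rw [← add_lt_add_iff_left ν, hμeq]; exact hlt
      obtain ⟨n, hn⟩ := Ordinal.lt_omega0.1 hkω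
      have := hall n
      rw [← hμeq, hn, add_lt_add_iff_left] at this
      exact absurd this (lt_irrefl _)
    have hlt : lam ≤ t := by
      show GapFoot B G ≤ t
      rw [hν', ← hμ]
      exact hsm.monotone hνω
    exact absurd hs' (not_lt.2 (hlt.trans ht_le))
  set Bb := B ∪ {l | IsLimitPoint B l} with hBb
  have hBbB : ∀ n : ℕ, e (n + 1) ∈ Bb → e (n + 1) ∈ B := by
    intro n hmem
    rcases hmem with h | h
    · exact h
    · exact absurd (lp_mono (B_sub_I hB) h) (lp_not_of_greatest (hgreat n))
  have heB : ∀ n : ℕ, e (n + 1) ∈ B := by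
    intro n
    obtain ⟨β, hβB, hβgt, hβlt⟩ := lp_exists_between hlamlp (he_lt (n + 1))
    have hβ0 : e 0 < β := lt_trans (hmono (Nat.succ_pos n)) hβgt
    obtain ⟨m, rfl⟩ := hbetween β (B_sub_I hB hβB) hβ0 hβlt
    have hstep : ∀ k : ℕ, e (k + 1) ∈ Bb → e k ∈ Bb := by
      intro k hk
      exact hB.1.2.2.2.2 (e (k + 1)) hk (e k) (hgreat k)
    have hmem : e (n + 1) ∈ Bb := by
      have hn1 : n + 1 ≤ m + 1 := by
        by_contra hcon
        push_neg at hcon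
        exact absurd (hmono hcon) (not_lt.2 (le_of_lt hβgt))
      exact descend (P := fun k => e k ∈ Bb) hstep (m + 1) (Or.inl hβB) (n + 1) hn1
    exact hBbB n hmem
  have hσ : GapSigma I B G ≤ e 0 := by
    apply csSup_le'
    rintro β ⟨hβB, hβlt, hβlp⟩
    by_contra hcon
    push_neg at hcon
    have hβlam : β < lam := hsInf ▸ hβlt
    obtain ⟨m, rfl⟩ := hbetween β (B_sub_I hB hβB) hcon hβlam
    exact absurd hβlp (lp_not_of_greatest (hgreat m))
  obtain ⟨n, hn⟩ := hsupe (max s (e 0)) (max_lt hs (he_lt 0))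
  have hn0 : e 0 < e n := lt_of_le_of_lt (le_max_right s (e 0)) hn
  have hnne : n ≠ 0 := by rintro rfl; exact absurd hn0 (lt_irrefl _)
  obtain ⟨m, rfl⟩ := Nat.exists_eq_succ_of_ne_zero hnne
  refine ⟨e (m + 1), ⟨heB m, lt_of_le_of_lt hσ hn0, he_lt (m + 1)⟩, ?_⟩
  exact lt_of_le_of_lt (le_max_left s (e 0)) hn

lemma lim_le_sigma (hB : LimitSuitable I B) {G : Set Ordinal} {d : Ordinal}
    (hd : d ∈ B) (hlp : IsLimitPoint I d) (hdlt : d < sInf G) :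
    d ≤ GapSigma I B G := by
  have hbdd : BddAbove {β ∈ B | β < sInf G ∧ IsLimitPoint I β} :=
    (bddAbove_of_countable (hB.1.2.1.mono subset_union_left)).mono (fun x hx => hx.1)
  exact le_csSup hbdd ⟨hd, hdlt, hlp⟩

lemma tail_not_lpI (hIunb : IsUnboundedSet I) (hB : LimitSuitable I B) (hmin : sInf I ∈ B)
    {G : Set Ordinal} (hG : IsGap I B G) {γ : Ordinal} (hγ : γ ∈ GapTail I B G) :
    ¬ IsLimitPoint I γ := by
  intro hlp
  obtain ⟨-, -, hsInf, -, -⟩ := gap_basic hIunb hB hmin hG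
  exact absurd (lim_le_sigma hB hγ.1 hlp (hsInf ▸ hγ.2.2)) (not_le.2 hγ.2.1)

lemma mem_le_delta' {G : Set Ordinal} {x : Ordinal} (hx : x ∈ (I \ B) ∩ Iio (GapFoot B G)) :
    x ≤ GapDelta' I B G :=
  le_csSup ⟨GapFoot B G, fun y hy => le_of_lt hy.2⟩ hx

lemma delta'_le_sigma (hIunb : IsUnboundedSet I) (hB : LimitSuitable I B) (hmin : sInf I ∈ B)
    {G : Set Ordinal} (hG : IsGap I B G) :
    GapDelta' I B G ≤ GapSigma I B G := by
  apply csSup_le'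
  rintro x ⟨hx1, hx2⟩
  obtain ⟨d, hdB, hxd, hdlam, hdlp, -, -⟩ := gap_aux hIunb hB hmin hG hx1 hx2
  obtain ⟨-, -, hsInf, -, -⟩ := gap_basic hIunb hB hmin hG
  exact le_of_lt (lt_of_lt_of_le hxd (lim_le_sigma hB hdB hdlp (hsInf ▸ hdlam)))

lemma sigma_lt_foot (hIcl : IsClosedSet I) (hIunb : IsUnboundedSet I) (hB : LimitSuitable I B)
    (hmin : sInf I ∈ B) {G : Set Ordinal} (hG : IsGap I B G) :
    GapSigma I B G < GapFoot B G := by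
  obtain ⟨-, -, -, hlamlp, -⟩ := gap_basic hIunb hB hmin hG
  obtain ⟨γ, hγ, -⟩ := tail_cofinal hIcl hIunb hB hmin hG hlamlp.1
  exact lt_trans hγ.2.1 hγ.2.2

lemma find_gap (hIunb : IsUnboundedSet I) (hB : LimitSuitable I B) (hmin : sInf I ∈ B)
    {l : Ordinal} (hl : l ∈ B) :
    ∃ G, IsGap I B G ∧ GapDelta' I B G ≤ l ∧ l < GapFoot B G ∧
      (∀ x ∈ I \ B, x < GapFoot B G → x ≤ l) := by
  have hbddB : BddAbove B := bddAbove_of_countable (hB.1.2.1.mono subset_union_left)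
  obtain ⟨u, hu⟩ := hbddB
  obtain ⟨y, hyI, hy⟩ := hIunb u
  have hyB : y ∉ B := fun h => absurd (hu h) (not_le.2 hy)
  have hne : ((I \ B) ∩ Ioi l).Nonempty := ⟨y, ⟨hyI, hyB⟩, lt_of_le_of_lt (hu hl) hy⟩
  set m := sInf ((I \ B) ∩ Ioi l) with hmdef
  have hm := csInf_mem hne
  obtain ⟨G, hG, hmG⟩ := exists_gap hm.1
  obtain ⟨hlamG, hlamnB, hsInf, -, -⟩ := gap_basic hIunb hB hmin hG
  have hfoot_le_m : GapFoot B G ≤ m := hsInf ▸ csInf_le' hmG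
  have hlm : l < m := hm.2
  have hllam : l < GapFoot B G := by
    rcases lt_or_ge l (GapFoot B G) with h | h
    · exact h
    · exfalso
      have hlG : l ∈ G := by
        rcases (hB.2 G hG).1 with ⟨-, hGeq⟩ | ⟨δ, -, -, -, hGeq⟩
        · rw [hGeq]; exact ⟨B_sub_I hB hl, h⟩
        · have hmδ : m < δ := by rw [hGeq] at hmG; exact hmG.2.2
          rw [hGeq]
          exact ⟨B_sub_I hB hl, h, lt_trans hlm hmδ⟩
      exact (hG.2.1 hlG).2 hl
  have hbound : ∀ x ∈ I \ B, x < GapFoot B G → x ≤ l := by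
    intro x hx hxlt
    by_contra hc
    push_neg at hc
    have hmx : m ≤ x := csInf_le' ⟨hx, hc⟩
    exact absurd (lt_of_lt_of_le hxlt hfoot_le_m) (not_lt.2 hmx)
  have hδ'le : GapDelta' I B G ≤ l :=
    csSup_le' (by rintro x ⟨hx1, hx2⟩; exact hbound x hx1 hx2)
  exact ⟨G, hG, hδ'le, hllam, hbound⟩

lemma lp_of_between {S : Set Ordinal} {l : Ordinal} (h0 : 0 < l)
    (h : ∀ c < l, ∃ x ∈ S, c < x ∧ x < l) : IsLimitPoint S l := by
  refine ⟨h0, le_antisymm (csSup_le' (by rintro x ⟨-, hx⟩; exact le_of_lt hx)) ?_⟩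
  by_contra hc
  push_neg at hc
  obtain ⟨x, hxS, hgt, hlt⟩ := h _ hc
  exact absurd (le_csSup ⟨l, fun y hy => le_of_lt hy.2⟩ (⟨hxS, hlt⟩ : x ∈ S ∩ Iio l))
    (not_le.2 hgt)

/-- Elements of the determined subsequence below the foot of a gap `G` are below the
traversal's pick for `G`. -/
lemma D_below_foot (hIunb : IsUnboundedSet I) (hB : LimitSuitable I B) (hmin : sInf I ∈ B)
    {b : Set Ordinal} (hb : TailTraversal I B b) {G : Set Ordinal} (hG : IsGap I B G)
    {γG : Ordinal} (hγG : γG ∈ b ∧ γG ∈ GapTail I B G) {x : Ordinal}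
    (hx : x ∈ DeterminedSub I B b) (hxf : x < GapFoot B G) : x < γG := by
  obtain ⟨γ', hγ'b, G', hG', hγ'tail, hblk⟩ := hx
  obtain ⟨hfG, hfGnB, hsInfG, -, -⟩ := gap_basic hIunb hB hmin hG
  obtain ⟨hfG', hfG'nB, hsInfG', -, -⟩ := gap_basic hIunb hB hmin hG'
  rcases lt_trichotomy (GapFoot B G') (GapFoot B G) with h | h | h
  · have hfIB : GapFoot B G' ∈ I \ B := hG'.2.1 hfG'
    obtain ⟨d, hdB, hfd, hdf, hdlp, -, -⟩ := gap_aux hIunb hB hmin hG hfIB h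
    have hdσ : d ≤ GapSigma I B G := lim_le_sigma hB hdB hdlp (hsInfG ▸ hdf)
    have hγ'f : γ' < GapFoot B G' := hγ'tail.2.2
    calc x < γ' := hblk.1.2
    _ < GapFoot B G' := hγ'f
    _ < d := hfd
    _ ≤ GapSigma I B G := hdσ
    _ < γG := hγG.2.2.1
  · have hh := hfG'
    rw [h] at hh
    have hG'G : G' = G := gap_unique hG' hG hh hfG
    subst hG'G
    obtain ⟨w, hw, huniq⟩ := hb.2.1 G' hG'
    have h1 : γ' = γG := (huniq γ' ⟨hγ'b, hγ'tail⟩).trans (huniq γG hγG).symm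
    exact h1 ▸ hblk.1.2
  · exfalso
    have hfIB : GapFoot B G ∈ I \ B := hG.2.1 hfG
    have h1 : GapFoot B G ≤ GapDelta' I B G' := mem_le_delta' ⟨hfIB, h⟩
    exact absurd (lt_of_lt_of_le hxf (h1.trans hblk.1.1)) (lt_irrefl _)

lemma D_not_lp (hIunb : IsUnboundedSet I) (hB : LimitSuitable I B) (hmin : sInf I ∈ B)
    {b : Set Ordinal} (hb : TailTraversal I B b) {G : Set Ordinal} (hG : IsGap I B G)
    {γG : Ordinal} (hγG : γG ∈ b ∧ γG ∈ GapTail I B G) {l : Ordinal}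
    (hl : γG < l) (hlf : l ≤ GapFoot B G) : ¬ IsLimitPoint (DeterminedSub I B b) l := by
  intro hlp
  have h1 : sSup (DeterminedSub I B b ∩ Iio l) ≤ γG := by
    apply csSup_le'
    rintro x ⟨hx1, hx2⟩
    exact le_of_lt (D_below_foot hIunb hB hmin hb hG hγG hx1 (lt_of_lt_of_le hx2 hlf))
  rw [hlp.2] at h1
  exact absurd hl (not_lt.2 h1)

lemma tails_disjoint (hIunb : IsUnboundedSet I) (hB : LimitSuitable I B) (hmin : sInf I ∈ B)
    {G G' : Set Ordinal} (hG : IsGap I B G) (hG' : IsGap I B G') {γ : Ordinal}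
    (h1 : γ ∈ GapTail I B G) (h2 : γ ∈ GapTail I B G') : G = G' := by
  obtain ⟨hfG, hfGnB, hsInfG, -, -⟩ := gap_basic hIunb hB hmin hG
  obtain ⟨hfG', hfG'nB, hsInfG', -, -⟩ := gap_basic hIunb hB hmin hG'
  have key : ∀ {H H' : Set Ordinal}, IsGap I B H → IsGap I B H' → γ ∈ GapTail I B H →
      γ ∈ GapTail I B H' → GapFoot B H' ∈ H' → sInf H = GapFoot B H →
      ¬ GapFoot B H' < GapFoot B H := by
    intro H H' hH hH' ht ht' hfH' hsH hlt
    have hfIB : GapFoot B H' ∈ I \ B := hH'.2.1 hfH'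
    obtain ⟨d, hdB, hfd, hdf, hdlp, -, -⟩ := gap_aux hIunb hB hmin hH hfIB hlt
    have hdσ : d ≤ GapSigma I B H := lim_le_sigma hB hdB hdlp (hsH ▸ hdf)
    have : γ < γ := by
      calc γ < GapFoot B H' := ht'.2.2
      _ < d := hfd
      _ ≤ GapSigma I B H := hdσ
      _ < γ := ht.2.1
    exact absurd this (lt_irrefl _)
  rcases lt_trichotomy (GapFoot B G') (GapFoot B G) with h | h | h
  · exact absurd h (key hG hG' h1 h2 hfG' hsInfG)
  · rw [h] at hfG'
    exact gap_unique hG hG' hfG hfG'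
  · exact absurd h (key hG' hG h2 h1 hfG hsInfG')

lemma part1 (hIcl : IsClosedSet I) (hIunb : IsUnboundedSet I) (hB : LimitSuitable I B)
    (hmin : sInf I ∈ B) {b : Set Ordinal} (hb : TailTraversal I B b) :
    Suitable I (DeterminedSub I B b) := by
  set D := DeterminedSub I B b with hD
  have hDsubB : D ⊆ B := by
    rintro x ⟨γ, hγ, G, hG, htail, hblk⟩
    exact hblk.2
  have hDI : D ⊆ I := fun x hx => B_sub_I hB (hDsubB hx)
  have hBcnt : B.Countable := hB.1.2.1.mono subset_union_left
  refine ⟨hDI, hBcnt.mono hDsubB, ?_, ?_, ?_⟩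
  · -- closedness
    intro l hlp
    have hlpB : IsLimitPoint B l := lp_mono hDsubB hlp
    have hlpI : IsLimitPoint I l := lp_mono (B_sub_I hB) hlpB
    have hlI : l ∈ I := hIcl l hlpI
    have hlB : l ∈ B := by
      by_contra hlnB
      obtain ⟨H, hH, hlH⟩ := exists_gap ⟨hlI, hlnB⟩
      obtain ⟨hfH, hfHnB, hsInfH, -, -⟩ := gap_basic hIunb hB hmin hH
      have hfle : GapFoot B H ≤ l := hsInfH ▸ csInf_le' hlH
      have hub : ∀ x ∈ B ∩ Iio l, x ≤ GapFoot B H := by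
        intro x hx
        by_contra hc
        push_neg at hc
        have hxH : x ∈ H := by
          rcases (hB.2 H hH).1 with ⟨-, hHeq⟩ | ⟨δ, -, -, -, hHeq⟩
          · rw [hHeq]; exact ⟨B_sub_I hB hx.1, hc.le⟩
          · have hlδ : l < δ := by rw [hHeq] at hlH; exact hlH.2.2
            rw [hHeq]
            exact ⟨B_sub_I hB hx.1, hc.le, lt_trans hx.2 hlδ⟩
        exact (hH.2.1 hxH).2 hx.1
      have hlfoot : l = GapFoot B H := by
        apply le_antisymm _ hfle
        calc l = sSup (B ∩ Iio l) := hlpB.2.symm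
        _ ≤ GapFoot B H := csSup_le' hub
      obtain ⟨γH, hγH, -⟩ := hb.2.1 H hH
      have hγHl : γH < l := hlfoot ▸ hγH.2.2.2
      exact D_not_lp hIunb hB hmin hb hH hγH hγHl (le_of_eq hlfoot) hlp
    obtain ⟨G, hG, hδ'le, hllam, -⟩ := find_gap hIunb hB hmin hlB
    obtain ⟨γG, hγG, -⟩ := hb.2.1 G hG
    rcases lt_trichotomy l γG with h | h | h
    · exact ⟨γG, hγG.1, G, hG, hγG.2, ⟨hδ'le, h⟩, hlB⟩
    · exact absurd (h ▸ hlpI) (tail_not_lpI hIunb hB hmin hG hγG.2)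
    · exact absurd hlp (D_not_lp hIunb hB hmin hb hG hγG h (le_of_lt hllam))
  · -- limit points of countable cofinality
    intro β hβD hβlpI hβcof
    obtain ⟨γ, hγb, G, hG, hγtail, hblk⟩ := hβD
    have hβB : β ∈ B := hblk.2
    have hβlpBb : IsLimitPoint (B ∪ {l | IsLimitPoint B l}) β :=
      hB.1.2.2.2.1 β (Or.inl hβB) hβlpI hβcof
    apply lp_of_between hβlpI.1
    intro c hc
    rcases eq_or_lt_of_le hblk.1.1 with hδβ | hδβ
    · -- GapDelta' = β
      have hne : ((I \ B) ∩ Iio (GapFoot B G)).Nonempty := by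
        by_contra hempty
        rw [not_nonempty_iff_eq_empty] at hempty
        have h0 : sSup (I \ B ∩ Iio (GapFoot B G)) = 0 := by rw [hempty, csSup_empty]; rfl
        rw [h0] at hδβ
        exact absurd hδβ.symm (ne_of_gt hβlpI.1)
      have hcδ : c < sSup ((I \ B) ∩ Iio (GapFoot B G)) := hδβ ▸ hc
      obtain ⟨x, hxmem, hcx⟩ := exists_lt_of_lt_csSup hne hcδ
      have hxβ : x < β := by
        have hxle : x ≤ sSup (I \ B ∩ Iio (GapFoot B G)) := mem_le_delta' hxmem
        rcases (hδβ ▸ hxle).lt_or_eq with h | h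
        · exact h
        · exact absurd (h ▸ hβB) hxmem.1.2
      obtain ⟨d, hdB, hxd, hdfoot, hdlp, hdcof, hdleast⟩ :=
        gap_aux hIunb hB hmin hG hxmem.1 hxmem.2
      have hdβ : d ≤ β := hdleast β hβB hxβ
      have hdltβ : d < β := by
        rcases hdβ.lt_or_eq with h | h
        · exact h
        · exact absurd hβcof (not_le.2 (h ▸ hdcof))
      obtain ⟨G2, hG2, hδ'2, hdfoot2, -⟩ := find_gap hIunb hB hmin hdB
      obtain ⟨γ2, hγ2, -⟩ := hb.2.1 G2 hG2
      obtain ⟨-, -, hsInf2, -, -⟩ := gap_basic hIunb hB hmin hG2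
      have hdσ2 : d ≤ GapSigma I B G2 := lim_le_sigma hB hdB hdlp (hsInf2 ▸ hdfoot2)
      have hdγ2 : d < γ2 := lt_of_le_of_lt hdσ2 hγ2.2.2.1
      exact ⟨d, ⟨γ2, hγ2.1, G2, hG2, hγ2.2, ⟨hδ'2, hdγ2⟩, hdB⟩, lt_trans hcx hxd, hdltβ⟩
    · -- GapDelta' < β
      obtain ⟨x, hxBb, hxgt, hxlt⟩ := lp_exists_between hβlpBb (max_lt hc hδβ)
      have hxI : x ∈ I := hB.1.1 hxBb
      have hxB : x ∈ B := by
        by_contra hxnB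
        have hxfoot : x < GapFoot B G := lt_trans (lt_trans hxlt hblk.1.2) hγtail.2.2
        exact absurd (mem_le_delta' ⟨⟨hxI, hxnB⟩, hxfoot⟩)
          (not_le.2 (lt_of_le_of_lt (le_max_right c _) hxgt))
      refine ⟨x, ⟨γ, hγb, G, hG, hγtail, ⟨?_, lt_trans hxlt hblk.1.2⟩, hxB⟩,
        lt_of_le_of_lt (le_max_left c _) hxgt, hxlt⟩
      exact le_of_lt (lt_of_le_of_lt (le_max_right c _) hxgt)
  · -- immediate predecessors
    intro β hβD m hm
    obtain ⟨γ, hγb, G, hG, hγtail, hblk⟩ := hβD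
    have hβB : β ∈ B := hblk.2
    have hmBb : m ∈ B ∪ {l | IsLimitPoint B l} := hB.1.2.2.2.2 β (Or.inl hβB) m hm
    have hmI : m ∈ I := hm.1.1
    have hmβ : m < β := hm.1.2
    have hmB : m ∈ B := by
      rcases hmBb with h | h
      · exact h
      · by_contra hmnB
        obtain ⟨H, hH, hmH⟩ := exists_gap ⟨hmI, hmnB⟩
        obtain ⟨hfH, hfHnB, hsInfH, -, -⟩ := gap_basic hIunb hB hmin hH
        have hfle : GapFoot B H ≤ m := hsInfH ▸ csInf_le' hmH
        rcases (hB.2 H hH).1 with ⟨-, hHeq⟩ | ⟨δ, hδleast, hδlim, -, hHeq⟩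
        · have hβH : β ∈ H := by
            rw [hHeq]
            exact ⟨B_sub_I hB hβB, (hfle.trans hmβ.le : GapFoot B H ≤ β)⟩
          exact (hH.2.1 hβH).2 hβB
        · have hmδ : m < δ := hδleast.1.2 m hmH
          have hδI : δ ∈ I := B_sub_I hB hδleast.1.1
          have hδβ : δ ≤ β := by
            by_contra hc
            push_neg at hc
            have hβH : β ∈ H := by
              rw [hHeq]
              exact ⟨B_sub_I hB hβB, hfle.trans hmβ.le, hc⟩
            exact (hH.2.1 hβH).2 hβB
          rcases hδβ.lt_or_eq with h2 | h2
          · exact absurd (hm.2 ⟨hδI, h2⟩) (not_le.2 hmδ)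
          · exact absurd (h2 ▸ hδlim) (lp_not_of_greatest hm)
    have hδm : GapDelta' I B G ≤ m := by
      apply csSup_le'
      rintro x ⟨hx1, hx2⟩
      have hxδ : x ≤ GapDelta' I B G := mem_le_delta' ⟨hx1, hx2⟩
      have hxβ : x < β := by
        rcases (hxδ.trans hblk.1.1).lt_or_eq with h | h
        · exact h
        · exact absurd (h ▸ hβB) hx1.2
      exact hm.2 ⟨hx1.1, hxβ⟩
    exact ⟨γ, hγb, G, hG, hγtail, ⟨hδm, lt_trans hmβ hblk.1.2⟩, hmB⟩

lemma part2 (hIcl : IsClosedSet I) (hIunb : IsUnboundedSet I) (hB : LimitSuitable I B)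
    (hmin : sInf I ∈ B) {Bhat : Set Ordinal} (hBhat : Suitable I Bhat) (hsub : Bhat ⊆ B) :
    ∃ b, TailTraversal I B b ∧ Bhat ⊆ DeterminedSub I B b := by
  have hchoice : ∀ G, IsGap I B G →
      ∃ γ, γ ∈ GapTail I B G ∧ sSup (Bhat ∩ Iio (GapFoot B G)) < γ := by
    intro G hG
    obtain ⟨hfG, hfGnB, hsInfG, hflp, -⟩ := gap_basic hIunb hB hmin hG
    have hslt : sSup (Bhat ∩ Iio (GapFoot B G)) < GapFoot B G := by
      have hle : sSup (Bhat ∩ Iio (GapFoot B G)) ≤ GapFoot B G :=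
        csSup_le' (by rintro x ⟨-, hx⟩; exact le_of_lt hx)
      rcases hle.lt_or_eq with h | h
      · exact h
      · exfalso
        have : GapFoot B G ∈ Bhat := hBhat.2.2.1 _ ⟨hflp.1, h⟩
        exact hfGnB (hsub this)
    exact tail_cofinal hIcl hIunb hB hmin hG hslt
  choose f hf using hchoice
  refine ⟨{γ | ∃ G, ∃ h : IsGap I B G, γ = f G h}, ⟨?_, ?_, ?_⟩, ?_⟩
  · rintro γ ⟨G, hG, rfl⟩
    exact (hf G hG).1.1
  · intro G hG
    refine ⟨f G hG, ⟨⟨G, hG, rfl⟩, (hf G hG).1⟩, ?_⟩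
    rintro y ⟨⟨G', hG', rfl⟩, hytail⟩
    have hGG : G' = G := tails_disjoint hIunb hB hmin hG' hG (hf G' hG').1 hytail
    subst hGG
    rfl
  · rintro γ ⟨G, hG, rfl⟩
    exact ⟨G, hG, (hf G hG).1⟩
  · intro x hx
    have hxB : x ∈ B := hsub hx
    obtain ⟨G, hG, hδ'le, hxfoot, -⟩ := find_gap hIunb hB hmin hxB
    have hxsup : x ≤ sSup (Bhat ∩ Iio (GapFoot B G)) :=
      le_csSup ⟨GapFoot B G, fun y hy => le_of_lt hy.2⟩ ⟨hx, hxfoot⟩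
    exact ⟨f G hG, ⟨G, hG, rfl⟩, G, hG, (hf G hG).1,
      ⟨hδ'le, lt_of_le_of_lt hxsup (hf G hG).2⟩, hxB⟩

end Aux

/-- For a limit suitable `B` containing `min I`: (1) the subsequence of `B` determined by any
tail traversal is suitable; (2) every suitable subset of `B` is contained in the subsequence
determined by some tail traversal. -/
theorem stmt8 (I B : Set Ordinal) (hIcl : IsClosedSet I) (hIunb : IsUnboundedSet I)
    (hB : LimitSuitable I B) (hmin : sInf I ∈ B) :
    (∀ b, TailTraversal I B b → Suitable I (DeterminedSub I B b)) ∧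
    (∀ Bhat, Suitable I Bhat → Bhat ⊆ B →
      ∃ b, TailTraversal I B b ∧ Bhat ⊆ DeterminedSub I B b) := by
  exact ⟨fun _ hb => part1 hIcl hIunb hB hmin hb,
    fun _ h1 h2 => part2 hIcl hIunb hB hmin h1 h2⟩
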